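/- For the Kummer confluent hypergeometric function ₁F₁(a;c;x) = Σ_{k≥0} (a)_k x^k / [(c)_k k!], with c > 0, δ > 0, x > 0, and 0 < a < b: Γ(a+δ)Γ(b)/[Γ(b+δ)Γ(a)] < ₁F₁(b+δ;c;x)·₁F₁(a;c;x) / [₁F₁(a+δ;c;x)·₁F₁(b;c;x)] < 1. -/

import Mathlib

/-- Pochhammer symbol (rising factorial) for real argument. -/
def poch (a : ℝ) (n : ℕ) : ℝ := ∏ i ∈ Finset.range n, (a + i)

/-- The Kummer confluent hypergeometric function ₁F₁(a;c;x). -/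
noncomputable def oneFone (a c x : ℝ) : ℝ :=
  ∑' k : ℕ, poch a k * x ^ k / (poch c k * k.factorial)

lemma poch_zero (a : ℝ) : poch a 0 = 1 := by simp [poch]

lemma poch_succ (a : ℝ) (n : ℕ) : poch a (n + 1) = poch a n * (a + n) := by
  simp [poch, Finset.prod_range_succ]

lemma poch_one (a : ℝ) : poch a 1 = a := by simp [poch]

lemma poch_pos {a : ℝ} (ha : 0 < a) (n : ℕ) : 0 < poch a n := by
  refine Finset.prod_pos fun i _ => ?_
  positivity

lemma poch_add (a : ℝ) (m n : ℕ) : poch a (m + n) = poch a m * poch (a + m) (n) := by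
  simp only [poch, Finset.prod_range_add]
  congr 1
  refine Finset.prod_congr rfl fun i _ => ?_
  push_cast; ring

lemma poch_mono {a b : ℝ} (ha : 0 < a) (hab : a ≤ b) (n : ℕ) : poch a n ≤ poch b n := by
  refine Finset.prod_le_prod (fun i _ => by positivity) fun i _ => by linarith

/-- convexity-type increment inequality for poch -/
lemma poch_convex {a b e : ℝ} (ha : 0 < a) (hab : a ≤ b) (he : 0 ≤ e) (n : ℕ) :
    poch (a + e) n - poch a n ≤ poch (b + e) n - poch b n := by
  induction n with
  | zero => norm_num [poch_zero]
  | succ n ih =>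
    have hb : 0 < b := lt_of_lt_of_le ha hab
    have h1 : poch a n ≤ poch b n := poch_mono ha hab n
    have h2 : 0 < poch a n := poch_pos ha n
    have h3 : poch a n ≤ poch (a+e) n := poch_mono ha (by linarith) n
    have h4 : poch (a+e) n ≤ poch (b+e) n := poch_mono (by linarith) (by linarith) n
    have h5 : (0:ℝ) ≤ n := Nat.cast_nonneg n
    simp only [poch_succ]
    nlinarith [ih, poch_pos hb n, poch_pos (show (0:ℝ) < a+e by linarith) n]

lemma choose_sum_shift (n : ℕ) (f : ℕ → ℝ) :
    ∑ k ∈ Finset.range (n + 2), ((n+1).choose k : ℝ) * f k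
      = ∑ k ∈ Finset.range (n + 1), (n.choose k : ℝ) * f k
        + ∑ k ∈ Finset.range (n + 1), (n.choose k : ℝ) * f (k + 1) := by
  rw [Finset.sum_range_succ' (fun k => ((n+1).choose k : ℝ) * f k)]
  have h1 : ∀ k, ((n+1).choose (k+1) : ℝ) = (n.choose k : ℝ) + (n.choose (k+1) : ℝ) := by
    intro k; rw [Nat.choose_succ_succ]; push_cast; ring
  simp_rw [h1, add_mul, Finset.sum_add_distrib]
  have h2 : ∑ k ∈ Finset.range (n + 1), (n.choose (k+1) : ℝ) * f (k + 1)
      = ∑ k ∈ Finset.range (n + 1), (n.choose k : ℝ) * f k - f 0 := by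
    rw [Finset.sum_range_succ (fun k => (n.choose (k+1) : ℝ) * f (k+1))]
    rw [Finset.sum_range_succ' (fun k => (n.choose k : ℝ) * f k)]
    simp [Nat.choose_succ_self]
  rw [h2]
  simp [Nat.choose_zero_right]
  ring

lemma vandermonde (p q : ℝ) (n : ℕ) :
    ∑ k ∈ Finset.range (n + 1), (n.choose k : ℝ) * (poch p k * poch q (n - k))
      = poch (p + q) n := by
  induction n with
  | zero => simp [poch]
  | succ n ih =>
    rw [choose_sum_shift n (fun k => poch p k * poch q (n + 1 - k))]
    have e1 : ∀ k ∈ Finset.range (n+1), (n.choose k : ℝ) * (poch p k * poch q (n + 1 - k))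
        = (n.choose k : ℝ) * (poch p k * poch q (n - k)) * (q + (n - k : ℕ)) := by
      intro k hk
      rw [Finset.mem_range] at hk
      have : n + 1 - k = (n - k) + 1 := by omega
      rw [this, poch_succ]; ring
    have e2 : ∀ k ∈ Finset.range (n+1), (n.choose k : ℝ) * (poch p (k+1) * poch q (n + 1 - (k+1)))
        = (n.choose k : ℝ) * (poch p k * poch q (n - k)) * (p + k) := by
      intro k hk
      have : n + 1 - (k+1) = n - k := by omega
      rw [this, poch_succ]; ring
    rw [Finset.sum_congr rfl e1, Finset.sum_congr rfl e2]
    have e3 : ∀ k ∈ Finset.range (n+1),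
        (n.choose k : ℝ) * (poch p k * poch q (n - k)) * (q + (n - k : ℕ))
        + (n.choose k : ℝ) * (poch p k * poch q (n - k)) * (p + k)
        = ((n.choose k : ℝ) * (poch p k * poch q (n - k))) * (p + q + n) := by
      intro k hk
      rw [Finset.mem_range] at hk
      have hc : ((n - k : ℕ) : ℝ) = (n : ℝ) - (k : ℝ) := by
        rw [Nat.cast_sub (by omega)]
      rw [hc]; ring
    rw [← Finset.sum_add_distrib, Finset.sum_congr rfl e3, ← Finset.sum_mul, ih, poch_succ]

lemma stepA {A B A' B' d d' : ℝ} (hA' : 0 < A') (hB' : 0 < B')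
    (f1 : A * B' ≤ A' * B) (f2 : B * B' ≤ A * A')
    (hd1 : d ≤ d') (hd2 : -d ≤ d') :
    (A' + B') * (d * (A - B)) ≤ (A + B) * (d' * (A' - B')) := by
  have hd' : 0 ≤ d' := by linarith
  rcases le_total B A with hBA | hAB
  · have k0 : 0 ≤ A - B := by linarith
    have e1 : (A' + B') * (d * (A - B)) ≤ (A' + B') * (d' * (A - B)) := by
      have := mul_le_mul_of_nonneg_right hd1 k0
      have hpos : 0 ≤ A' + B' := by linarith
      nlinarith
    have e2 : (A' + B') * (A - B) ≤ (A + B) * (A' - B') := by nlinarith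
    calc (A' + B') * (d * (A - B)) ≤ (A' + B') * (d' * (A - B)) := e1
    _ = d' * ((A' + B') * (A - B)) := by ring
    _ ≤ d' * ((A + B) * (A' - B')) := mul_le_mul_of_nonneg_left e2 hd'
    _ = (A + B) * (d' * (A' - B')) := by ring
  · have k0 : 0 ≤ B - A := by linarith
    have e1 : (A' + B') * (d * (A - B)) ≤ (A' + B') * (d' * (B - A)) := by
      have h1 : d * (A - B) = (-d) * (B - A) := by ring
      have := mul_le_mul_of_nonneg_right hd2 k0
      have hpos : 0 ≤ A' + B' := by linarith
      nlinarith
    have e2 : (A' + B') * (B - A) ≤ (A + B) * (A' - B') := by nlinarith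
    calc (A' + B') * (d * (A - B)) ≤ (A' + B') * (d' * (B - A)) := e1
    _ = d' * ((A' + B') * (B - A)) := by ring
    _ ≤ d' * ((A + B) * (A' - B')) := mul_le_mul_of_nonneg_left e2 hd'
    _ = (A + B) * (d' * (A' - B')) := by ring

lemma stepB {α β H K H' K' : ℝ} (hαβ : 0 ≤ α + β) (h : H' * K ≤ H * K') :
    (β * H' - K' / 2) * (α * H + K / 2) ≤ (α * H' + K' / 2) * (β * H - K / 2) := by
  nlinarith [mul_le_mul_of_nonneg_left h hαβ]

/-- Core scalar inequality for the ratio monotonicity step. -/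
lemma coreM {P Q P' Q' x y x' y' ρ : ℝ}
    (hQ' : 0 < Q') (hy' : 0 < y') (hx : 0 < x) (hy : 0 < y) (hx' : 0 < x')
    (hQ'P : Q' ≤ P) (hQ'Q : Q' ≤ Q) (hPP' : P ≤ P') (hQP' : Q ≤ P')
    (hsum : P + Q = P' + Q')
    (hxx' : x ≤ x') (hyx' : y ≤ x') (hy'x : y' ≤ x) (hy'y : y' ≤ y)
    (hρ : 0 ≤ ρ) :
    (P' * Q' * (x' + y')) * (P * x * (P + ρ) + Q * y * (Q + ρ))
      ≤ (P' * x' * (P' + ρ) + Q' * y' * (Q' + ρ)) * (P * Q * (x + y)) := by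
  have hP : 0 < P := lt_of_lt_of_le hQ' hQ'P
  have hQ : 0 < Q := lt_of_lt_of_le hQ' hQ'Q
  have hP' : 0 < P' := lt_of_lt_of_le hQ hQP'
  have hA'pos : 0 < P' * x' := mul_pos hP' hx'
  have hB'pos : 0 < Q' * y' := mul_pos hQ' hy'
  have f1 : (P * x) * (Q' * y') ≤ (P' * x') * (Q * y) := by
    have h1 : P * x ≤ P' * x' := mul_le_mul hPP' hxx' (le_of_lt hx) (le_of_lt hP')
    have h2 : Q' * y' ≤ Q * y := mul_le_mul hQ'Q hy'y (le_of_lt hy') (le_of_lt hQ)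
    exact mul_le_mul h1 h2 (by positivity) (by positivity)
  have f2 : (Q * y) * (Q' * y') ≤ (P * x) * (P' * x') := by
    have h1 : Q * y ≤ P' * x' := mul_le_mul hQP' hyx' (le_of_lt hy) (le_of_lt hP')
    have h2 : Q' * y' ≤ P * x := mul_le_mul hQ'P hy'x (le_of_lt hy') (le_of_lt hP)
    calc (Q * y) * (Q' * y') ≤ (P' * x') * (P * x) :=
          mul_le_mul h1 h2 (by positivity) (by positivity)
    _ = (P * x) * (P' * x') := by ring
  have step1 : ((P' * x') + (Q' * y')) * ((P - Q) * ((P * x) - (Q * y)))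
      ≤ ((P * x) + (Q * y)) * ((P' - Q') * ((P' * x') - (Q' * y'))) :=
    stepA hA'pos hB'pos f1 f2 (by linarith) (by linarith)
  have hαβ : 0 ≤ ((P + Q) / 2 + ρ) + (P + Q) / 2 := by positivity
  have main := stepB hαβ step1
  have eL : (P' * Q' * (x' + y')) * (P * x * (P + ρ) + Q * y * (Q + ρ))
      = (((P+Q)/2) * ((P' * x') + (Q' * y')) - ((P' - Q') * ((P' * x') - (Q' * y'))) / 2)
        * ((((P+Q)/2 + ρ)) * ((P * x) + (Q * y)) + ((P - Q) * ((P * x) - (Q * y))) / 2) := by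
    linear_combination (-(1:ℝ)/2 * ((P'*x') + (Q'*y')) *
      (((P+Q)/2 + ρ) * ((P*x) + (Q*y)) + ((P - Q) * ((P*x) - (Q*y))) / 2)) * hsum
  have eR : (P' * x' * (P' + ρ) + Q' * y' * (Q' + ρ)) * (P * Q * (x + y))
      = ((((P+Q)/2 + ρ)) * ((P' * x') + (Q' * y')) + ((P' - Q') * ((P' * x') - (Q' * y'))) / 2)
        * (((P+Q)/2) * ((P * x) + (Q * y)) - ((P - Q) * ((P * x) - (Q * y))) / 2) := by
    linear_combination (-(1:ℝ)/2 * ((P'*x') + (Q'*y')) *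
      (((P+Q)/2) * ((P*x) + (Q*y)) - ((P - Q) * ((P*x) - (Q*y))) / 2)) * hsum
  rw [eL, eR]
  exact main
section Combinatorial

def phi (n i : ℕ) (p q : ℝ) : ℝ := poch p i * poch q (n - i) + poch p (n - i) * poch q i

def pd (a b δ : ℝ) (n k : ℕ) : ℝ :=
  poch (a + δ) k * poch b (n - k) - poch (b + δ) k * poch a (n - k)

def TT (a b δ : ℝ) (n j : ℕ) : ℝ :=
  ∑ k ∈ Finset.Icc j (n - j), (n.choose k : ℝ) * pd a b δ n k

def GG (a b δ : ℝ) (n j : ℕ) : ℝ := phi n j (a + δ) b - phi n j (b + δ) a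

variable {a b δ : ℝ}

lemma phi_pos {p q : ℝ} (hp : 0 < p) (hq : 0 < q) (n i : ℕ) : 0 < phi n i p q := by
  have h1 := poch_pos hp i
  have h2 := poch_pos hp (n - i)
  have h3 := poch_pos hq i
  have h4 := poch_pos hq (n - i)
  unfold phi; nlinarith

lemma pd_add_pd (ha : 0 < a) {n j : ℕ} (hj : j ≤ n) :
    pd a b δ n j + pd a b δ n (n - j) = GG a b δ n j := by
  have h : n - (n - j) = j := by omega
  simp only [pd, GG, phi, h]
  ring

lemma poch_split2 (t : ℝ) (r : ℕ) :
    poch t (r + 2) = t * (poch (t + 1) r * (t + 1 + r)) := by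
  have h : r + 2 = 1 + (r + 1) := by omega
  rw [h, poch_add t 1 (r + 1), poch_one, poch_succ]
  push_cast; ring

lemma phi_eq {p q : ℝ} {n i : ℕ} (hi : 2 * (i + 1) ≤ n) :
    phi n i p q = (poch p i * poch q i) *
      ((p + i) * poch (p + i + 1) (n - 2 * (i + 1)) * ((p + i) + ((n - 2 * (i + 1) : ℕ) + 1))
        + (q + i) * poch (q + i + 1) (n - 2 * (i + 1)) * ((q + i) + ((n - 2 * (i + 1) : ℕ) + 1))) := by
  set r := n - 2 * (i + 1) with hr
  have h1 : n - i = i + (r + 2) := by omega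
  have e : ∀ t : ℝ, poch t (n - i) = poch t i * ((t + i) * (poch (t + i + 1) r * (t + i + 1 + r))) := by
    intro t
    rw [h1, poch_add t i (r + 2), poch_split2]
  rw [phi, e p, e q]
  ring

lemma phi_succ_eq {p q : ℝ} {n i : ℕ} (hi : 2 * (i + 1) ≤ n) :
    phi n (i + 1) p q = (poch p i * poch q i) *
      ((p + i) * (q + i) * (poch (p + i + 1) (n - 2 * (i + 1)) + poch (q + i + 1) (n - 2 * (i + 1)))) := by
  set r := n - 2 * (i + 1) with hr
  have h1 : n - (i + 1) = (i + 1) + r := by omega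
  have e : ∀ t : ℝ, poch t (n - (i + 1)) = poch t i * (t + i) * poch (t + i + 1) r := by
    intro t
    rw [h1, poch_add t (i + 1) r, poch_succ]
    push_cast; ring_nf
  have e2 : ∀ t : ℝ, poch t (i + 1) = poch t i * (t + i) := fun t => poch_succ t i
  rw [phi, e p, e q, e2 p, e2 q]
  ring

/-- Ratio monotonicity step (lemma M). -/
lemma phi_ratio_step (ha : 0 < a) (hab : a < b) (hδ : 0 < δ) {n i : ℕ}
    (hi : 2 * (i + 1) ≤ n) :
    phi n (i + 1) (b + δ) a * phi n i (a + δ) b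
      ≤ phi n i (b + δ) a * phi n (i + 1) (a + δ) b := by
  set r := n - 2 * (i + 1) with hr
  have hb : 0 < b := lt_trans ha hab
  have hRR : 0 ≤ (poch (b + δ) i * poch a i) * (poch (a + δ) i * poch b i) := by
    have := poch_pos (show (0:ℝ) < b + δ by linarith) i
    have := poch_pos ha i
    have := poch_pos (show (0:ℝ) < a + δ by linarith) i
    have := poch_pos hb i
    positivity
  have key := coreM (P := a + δ + i) (Q := b + i) (P' := b + δ + i) (Q' := a + i)
    (x := poch (a + δ + i + 1) r) (y := poch (b + i + 1) r)
    (x' := poch (b + δ + i + 1) r) (y' := poch (a + i + 1) r) (ρ := (r : ℝ) + 1)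
    (by positivity) (poch_pos (by positivity) r)
    (poch_pos (by positivity) r) (poch_pos (by positivity) r) (poch_pos (by positivity) r)
    (by linarith) (by linarith) (by linarith) (by linarith) (by ring)
    (poch_mono (by positivity) (by linarith) r) (poch_mono (by positivity) (by linarith) r)
    (poch_mono (by positivity) (by linarith) r) (poch_mono (by positivity) (by linarith) r)
    (by positivity)
  rw [phi_eq hi, phi_eq hi, phi_succ_eq hi, phi_succ_eq hi]
  rw [← hr]
  calc (poch (b+δ) i * poch a i * ((b+δ+i) * (a+i) * (poch (b+δ+i+1) r + poch (a+i+1) r)))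
        * (poch (a+δ) i * poch b i * ((a+δ+i) * poch (a+δ+i+1) r * ((a+δ+i) + ((r:ℝ)+1))
            + (b+i) * poch (b+i+1) r * ((b+i) + ((r:ℝ)+1))))
      = ((poch (b+δ) i * poch a i) * (poch (a+δ) i * poch b i)) *
        (((b+δ+i) * (a+i) * (poch (b+δ+i+1) r + poch (a+i+1) r))
          * ((a+δ+i) * poch (a+δ+i+1) r * ((a+δ+i) + ((r:ℝ)+1))
            + (b+i) * poch (b+i+1) r * ((b+i) + ((r:ℝ)+1)))) := by ring
    _ ≤ ((poch (b+δ) i * poch a i) * (poch (a+δ) i * poch b i)) *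
        (((b+δ+i) * poch (b+δ+i+1) r * ((b+δ+i) + ((r:ℝ)+1))
            + (a+i) * poch (a+i+1) r * ((a+i) + ((r:ℝ)+1)))
          * ((a+δ+i) * (b+i) * (poch (a+δ+i+1) r + poch (b+i+1) r))) := by
        apply mul_le_mul_of_nonneg_left _ hRR
        calc ((b+δ+i) * (a+i) * (poch (b+δ+i+1) r + poch (a+i+1) r))
              * ((a+δ+i) * poch (a+δ+i+1) r * ((a+δ+i) + ((r:ℝ)+1))
                + (b+i) * poch (b+i+1) r * ((b+i) + ((r:ℝ)+1)))
            = ((b+δ+i) * (a+i) * (poch (b+δ+i+1) r + poch (a+i+1) r))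
              * ((a+δ+i) * poch (a+δ+i+1) r * ((a+δ+i) + ((r:ℝ)+1))
                + (b+i) * poch (b+i+1) r * ((b+i) + ((r:ℝ)+1))) := by ring
          _ ≤ _ := key
    _ = (poch (b+δ) i * poch a i * ((b+δ+i) * poch (b+δ+i+1) r * ((b+δ+i) + ((r:ℝ)+1))
            + (a+i) * poch (a+i+1) r * ((a+i) + ((r:ℝ)+1))))
        * (poch (a+δ) i * poch b i * ((a+δ+i) * (b+i) * (poch (a+δ+i+1) r + poch (b+i+1) r))) := by
        ring

end Combinatorial
section TTlemmas

variable {a b δ : ℝ}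

lemma Icc_zero_eq_range (n : ℕ) : Finset.Icc 0 n = Finset.range (n + 1) := by
  ext k; simp

lemma TT_zero (n : ℕ) : TT a b δ n 0 = 0 := by
  unfold TT
  rw [Nat.sub_zero, Icc_zero_eq_range]
  have : ∀ k ∈ Finset.range (n+1), (n.choose k : ℝ) * pd a b δ n k
      = (n.choose k : ℝ) * (poch (a+δ) k * poch b (n-k))
        - (n.choose k : ℝ) * (poch (b+δ) k * poch a (n-k)) := by
    intro k _; unfold pd; ring
  rw [Finset.sum_congr rfl this, Finset.sum_sub_distrib, vandermonde, vandermonde]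
  have : a + δ + b = b + δ + a := by ring
  rw [this, sub_self]

lemma TT_split {n j : ℕ} (hj : j < n - j) :
    TT a b δ n j = (n.choose j : ℝ) * pd a b δ n j + (n.choose j : ℝ) * pd a b δ n (n-j)
      + TT a b δ n (j+1) := by
  unfold TT
  have h1 : Finset.Icc j (n-j) = insert j (Finset.Icc (j+1) (n-j)) := by
    ext k; simp; omega
  have h2 : Finset.Icc (j+1) (n-j) = insert (n-j) (Finset.Icc (j+1) (n-(j+1))) := by
    ext k; simp; omega
  rw [h1, Finset.sum_insert (by simp), h2, Finset.sum_insert (by simp; omega)]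
  have hcs : (n.choose (n-j) : ℝ) = (n.choose j : ℝ) := by
    rw [Nat.choose_symm (by omega)]
  rw [hcs]; ring

lemma prod_pair_le {n : ℕ} (ha : 0 < a) (hab : a < b) (hδ : 0 < δ) :
    poch (b+δ) n * poch a n ≤ poch (a+δ) n * poch b n := by
  have e : ∀ p q : ℝ, poch p n * poch q n = ∏ i ∈ Finset.range n, ((p+i)*(q+i)) := by
    intro p q; rw [poch, poch, ← Finset.prod_mul_distrib]
  rw [e, e]
  refine Finset.prod_le_prod (fun i _ => ?_) (fun i _ => ?_)
  · have := Nat.cast_nonneg (α := ℝ) i; nlinarith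
  · have := Nat.cast_nonneg (α := ℝ) i; nlinarith

lemma TT_mid {n j : ℕ} (ha : 0 < a) (hab : a < b) (hδ : 0 < δ) (h : n = 2*j) :
    0 ≤ TT a b δ n j := by
  have h1 : n - j = j := by omega
  unfold TT
  rw [h1, Finset.Icc_self, Finset.sum_singleton]
  have : pd a b δ n j = poch (a+δ) j * poch b j - poch (b+δ) j * poch a j := by
    unfold pd; rw [h1]
  rw [this]
  have := prod_pair_le (n := j) ha hab hδ
  have hc : (0:ℝ) ≤ (n.choose j : ℝ) := Nat.cast_nonneg _
  nlinarith

lemma TT_one {n : ℕ} (ha : 0 < a) (hab : a < b) (hδ : 0 < δ) (hn : 1 ≤ n) :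
    0 ≤ TT a b δ n 1 := by
  have h0 : (0:ℕ) < n - 0 := by omega
  have := TT_split (a := a) (b := b) (δ := δ) (n := n) (j := 0) h0
  rw [TT_zero] at this
  have hpd0 : pd a b δ n 0 = poch b n - poch a n := by
    unfold pd; simp [poch_zero]
  have hpdn : pd a b δ n (n-0) = poch (a+δ) n - poch (b+δ) n := by
    unfold pd; simp [poch_zero, Nat.sub_self]
  have hconv := poch_convex ha (le_of_lt hab) (le_of_lt hδ) n
  simp only [Nat.choose_zero_right, Nat.cast_one, one_mul] at this
  rw [hpd0, hpdn] at this
  linarith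

lemma GG_desc (ha : 0 < a) (hab : a < b) (hδ : 0 < δ) {n i : ℕ}
    (hi : 2 * (i + 1) ≤ n) (h : GG a b δ n (i+1) < 0) : GG a b δ n i < 0 := by
  have hb : 0 < b := lt_trans ha hab
  have hM := phi_ratio_step ha hab hδ hi
  have h1 : 0 < phi n (i+1) (b+δ) a := phi_pos (by linarith) ha n (i+1)
  have h2 : 0 < phi n i (b+δ) a := phi_pos (by linarith) ha n i
  unfold GG at h ⊢
  by_contra hcon
  push_neg at hcon
  nlinarith

lemma A1 (ha : 0 < a) (hab : a < b) (hδ : 0 < δ) {n : ℕ} :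
    ∀ m j : ℕ, 2*j + m = n → 0 ≤ GG a b δ n j → 0 ≤ TT a b δ n j := by
  intro m
  induction m using Nat.strong_induction_on with
  | _ m ih =>
    intro j hmj hG
    match m, ih with
    | 0, _ => exact TT_mid ha hab hδ (by omega)
    | 1, _ =>
      have hj : j < n - j := by omega
      rw [TT_split hj]
      have hTT1 : TT a b δ n (j+1) = 0 := by
        unfold TT
        have : Finset.Icc (j+1) (n-(j+1)) = ∅ := by
          rw [Finset.Icc_eq_empty_iff]; omega
        rw [this, Finset.sum_empty]
      rw [hTT1]
      have := pd_add_pd (a := a) (b := b) (δ := δ) ha (show j ≤ n by omega)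
      have hc : (0:ℝ) ≤ (n.choose j : ℝ) := Nat.cast_nonneg _
      nlinarith
    | (m+2), ih =>
      have hj : j < n - j := by omega
      rw [TT_split hj]
      have hG1 : 0 ≤ GG a b δ n (j+1) := by
        by_contra hcon
        push_neg at hcon
        have := GG_desc ha hab hδ (show 2*(j+1) ≤ n by omega) hcon
        linarith
      have hT1 : 0 ≤ TT a b δ n (j+1) := ih m (by omega) (j+1) (by omega) hG1
      have hsum := pd_add_pd (a := a) (b := b) (δ := δ) ha (show j ≤ n by omega)
      have hc : (0:ℝ) ≤ (n.choose j : ℝ) := Nat.cast_nonneg _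
      nlinarith

lemma Tpos (ha : 0 < a) (hab : a < b) (hδ : 0 < δ) {n : ℕ} :
    ∀ j : ℕ, 2*j ≤ n → 0 ≤ TT a b δ n j := by
  intro j
  induction j using Nat.strong_induction_on with
  | _ j ih =>
    intro hj
    match j, ih with
    | 0, _ => rw [TT_zero]
    | 1, _ => exact TT_one ha hab hδ (by omega)
    | (j+2), ih =>
      by_cases hG : 0 ≤ GG a b δ n (j+2)
      · exact A1 ha hab hδ (n - 2*(j+2)) (j+2) (by omega) hG
      · push_neg at hG
        have hGd : GG a b δ n (j+1) < 0 :=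
          GG_desc ha hab hδ (show 2*(j+1+1) ≤ n by omega) (by simpa using hG)
        have hsplit := TT_split (a := a) (b := b) (δ := δ) (n := n) (j := j+1) (by omega)
        have hsum := pd_add_pd (a := a) (b := b) (δ := δ) ha (show j+1 ≤ n by omega)
        have hT1 : 0 ≤ TT a b δ n (j+1) := ih (j+1) (by omega) (by omega)
        have hc : (0:ℝ) ≤ (n.choose (j+1) : ℝ) := Nat.cast_nonneg _
        nlinarith

end TTlemmas
section UUlemmas

variable {a b δ c : ℝ}

noncomputable def UU (a b δ c : ℝ) (n j : ℕ) : ℝ :=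
  ∑ k ∈ Finset.Icc j (n - j),
    (n.choose k : ℝ) * ((poch c k)⁻¹ * (poch c (n - k))⁻¹) * pd a b δ n k

lemma UU_split {n j : ℕ} (hj : j < n - j) :
    UU a b δ c n j = (n.choose j : ℝ) * ((poch c j)⁻¹ * (poch c (n-j))⁻¹) * pd a b δ n j
      + (n.choose j : ℝ) * ((poch c j)⁻¹ * (poch c (n-j))⁻¹) * pd a b δ n (n-j)
      + UU a b δ c n (j+1) := by
  unfold UU
  have h1 : Finset.Icc j (n-j) = insert j (Finset.Icc (j+1) (n-j)) := by
    ext k; simp; omega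
  have h2 : Finset.Icc (j+1) (n-j) = insert (n-j) (Finset.Icc (j+1) (n-(j+1))) := by
    ext k; simp; omega
  rw [h1, Finset.sum_insert (by simp), h2, Finset.sum_insert (by simp; omega)]
  have hcs : (n.choose (n-j) : ℝ) = (n.choose j : ℝ) := by
    rw [Nat.choose_symm (by omega)]
  have hnn : n - (n - j) = j := by omega
  rw [hcs, hnn]; ring

lemma hh_mono (hc : 0 < c) {n j : ℕ} (hj : 2*j + 2 ≤ n) :
    (poch c j)⁻¹ * (poch c (n-j))⁻¹ ≤ (poch c (j+1))⁻¹ * (poch c (n-(j+1)))⁻¹ := by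
  have p1 := poch_pos hc j
  have p2 := poch_pos hc (j+1)
  have p3 := poch_pos hc (n-j)
  have p4 := poch_pos hc (n-(j+1))
  rw [← mul_inv, ← mul_inv]
  apply inv_anti₀ (by positivity)
  have e1 : poch c (j+1) = poch c j * (c + j) := poch_succ c j
  have e2 : poch c (n-j) = poch c (n-(j+1)) * (c + (n-(j+1) : ℕ)) := by
    have h : n - j = (n-(j+1)) + 1 := by omega
    rw [h, poch_succ]
  rw [e1, e2]
  have hcast : (j : ℝ) ≤ ((n-(j+1) : ℕ) : ℝ) := by
    have hle : j ≤ n-(j+1) := by omega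
    exact_mod_cast hle
  have hfac : c + (j:ℝ) ≤ c + ((n-(j+1) : ℕ) : ℝ) := by linarith
  nlinarith [mul_le_mul_of_nonneg_left hfac (le_of_lt (mul_pos p1 p4))]

lemma UU_ge (ha : 0 < a) (hab : a < b) (hδ : 0 < δ) (hc : 0 < c) {n : ℕ} :
    ∀ m j : ℕ, 2*j + m = n →
      (poch c j)⁻¹ * (poch c (n-j))⁻¹ * TT a b δ n j ≤ UU a b δ c n j := by
  intro m
  induction m using Nat.strong_induction_on with
  | _ m ih =>
    intro j hmj
    match m, ih with
    | 0, _ =>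
      have h1 : n - j = j := by omega
      unfold UU TT
      rw [h1, Finset.Icc_self, Finset.sum_singleton, Finset.sum_singleton, h1]
      ring_nf; rfl
    | 1, _ =>
      have hone : n - j = j + 1 := by omega
      have h2 : n - (j+1) = j := by omega
      have hpair : Finset.Icc j (n-j) = {j, j+1} := by
        rw [hone]; ext k; simp; omega
      unfold UU TT
      rw [hpair, Finset.sum_pair (by omega : j ≠ j+1), Finset.sum_pair (by omega : j ≠ j+1)]
      simp only [hone, h2]
      exact le_of_eq (by ring)
    | (m+2), ih =>
      have hj : j < n - j := by omega
      rw [UU_split hj, TT_split hj]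
      have hT1 : 0 ≤ TT a b δ n (j+1) := Tpos ha hab hδ (j+1) (by omega)
      have hUU1 : (poch c (j+1))⁻¹ * (poch c (n-(j+1)))⁻¹ * TT a b δ n (j+1)
          ≤ UU a b δ c n (j+1) := ih m (by omega) (j+1) (by omega)
      have hmono := hh_mono (n := n) (j := j) hc (by omega)
      have hhnn : (0:ℝ) ≤ (poch c j)⁻¹ * (poch c (n-j))⁻¹ := by
        have := poch_pos hc j; have := poch_pos hc (n-j); positivity
      nlinarith [mul_le_mul_of_nonneg_right hmono hT1]

lemma UU_nonneg (ha : 0 < a) (hab : a < b) (hδ : 0 < δ) (hc : 0 < c) (n : ℕ) :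
    0 ≤ UU a b δ c n 0 := by
  have := UU_ge (n := n) ha hab hδ hc n 0 (by omega)
  rw [TT_zero] at this
  simpa using this

lemma UU_two_pos (ha : 0 < a) (hab : a < b) (hδ : 0 < δ) (hc : 0 < c) :
    0 < UU a b δ c 2 0 := by
  unfold UU
  rw [show Finset.Icc 0 (2-0) = {0, 1, 2} from by ext k; simp; omega]
  rw [Finset.sum_insert (by simp), Finset.sum_insert (by simp), Finset.sum_singleton]
  unfold pd
  simp only [Nat.choose_zero_right, Nat.choose_one_right, Nat.choose_self, Nat.cast_one,
    Nat.cast_ofNat, poch_zero]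
  norm_num
  have e2 : ∀ t : ℝ, poch t 2 = t * (t + 1) := by
    intro t
    rw [show (2:ℕ) = 1 + 1 from rfl, poch_succ, poch_one]
    norm_num
  have e1 : ∀ t : ℝ, poch t 1 = t := poch_one
  simp only [e2, e1, poch_zero, poch_one]
  have hc1 : (0:ℝ) < c * (c+1) := by positivity
  have key : (c * (c+1))⁻¹ < c⁻¹ * c⁻¹ := by
    rw [← mul_inv]
    apply inv_strictAnti₀ (by positivity)
    nlinarith
  have hsum : b * (b+1) - a * (a+1) + ((a+δ) * (a+δ+1) - (b+δ) * (b+δ+1)) = -2*δ*(b-a) := by ring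
  have hmid : (a+δ) * b - (b+δ) * a = δ * (b-a) := by ring
  have hδba : 0 < δ * (b - a) := by nlinarith
  nlinarith [mul_lt_mul_of_pos_right key hδba]
section Analytic

variable {t c x : ℝ}

lemma w_pos (ht : 0 < t) (hc : 0 < c) (hx : 0 < x) (k : ℕ) :
    0 < poch t k * x ^ k / (poch c k * k.factorial) := by
  have h1 := poch_pos ht k
  have h2 := poch_pos hc k
  have h3 : (0:ℝ) < k.factorial := by exact_mod_cast Nat.factorial_pos k
  positivity

lemma w_succ (ht : 0 < t) (hc : 0 < c) (k : ℕ) :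
    poch t (k+1) * x ^ (k+1) / (poch c (k+1) * (k+1).factorial)
      = (poch t k * x ^ k / (poch c k * k.factorial)) * ((t + k) * x / ((c + k) * (k+1))) := by
  have h2 := poch_pos hc k
  have h3 : (0:ℝ) < k.factorial := by exact_mod_cast Nat.factorial_pos k
  have h4 : (0:ℝ) < c + k := by positivity
  have h5 : (0:ℝ) < (k:ℝ) + 1 := by positivity
  rw [poch_succ, poch_succ, pow_succ, Nat.factorial_succ]
  push_cast
  field_simp

lemma summable_w (ht : 0 < t) (hc : 0 < c) (hx : 0 < x) :
    Summable (fun k : ℕ => poch t k * x ^ k / (poch c k * k.factorial)) := by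
  apply summable_of_ratio_norm_eventually_le (r := 1/2) (by norm_num)
  have hN : ∀ k : ℕ, (⌈t⌉₊ + ⌈4*x⌉₊ + 1) ≤ k →
      ‖poch t (k+1) * x ^ (k+1) / (poch c (k+1) * (k+1).factorial)‖
        ≤ 1/2 * ‖poch t k * x ^ k / (poch c k * k.factorial)‖ := by
    intro k hk
    have hf1 := w_pos (x := x) ht hc hx k
    have hf2 := w_pos (x := x) ht hc hx (k+1)
    rw [Real.norm_eq_abs, Real.norm_eq_abs, abs_of_pos hf1, abs_of_pos hf2]
    rw [w_succ ht hc]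
    have hkt : t ≤ (k:ℝ) := by
      calc t ≤ (⌈t⌉₊ : ℝ) := Nat.le_ceil t
      _ ≤ (k:ℝ) := by exact_mod_cast le_trans (by omega) hk
    have hkx : 4*x ≤ (k:ℝ) := by
      calc 4*x ≤ (⌈4*x⌉₊ : ℝ) := Nat.le_ceil _
      _ ≤ (k:ℝ) := by exact_mod_cast le_trans (by omega) hk
    have h4 : (0:ℝ) < c + k := by positivity
    have h5 : (0:ℝ) < (k:ℝ) + 1 := by positivity
    have hratio : (t + k) * x / ((c + k) * (k+1)) ≤ 1/2 := by
      rw [div_le_iff₀ (by positivity)]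
      nlinarith
    calc (poch t k * x ^ k / (poch c k * k.factorial)) * ((t + k) * x / ((c + k) * (k+1)))
        ≤ (poch t k * x ^ k / (poch c k * k.factorial)) * (1/2) :=
          mul_le_mul_of_nonneg_left hratio (le_of_lt hf1)
      _ = 1/2 * (poch t k * x ^ k / (poch c k * k.factorial)) := by ring
  exact Filter.eventually_atTop.mpr ⟨_, hN⟩

lemma summable_w_norm (ht : 0 < t) (hc : 0 < c) (hx : 0 < x) :
    Summable (fun k : ℕ => ‖poch t k * x ^ k / (poch c k * k.factorial)‖) := by
  refine (summable_w ht hc hx).congr fun k => ?_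
  rw [Real.norm_eq_abs, abs_of_pos (w_pos ht hc hx k)]

lemma oneFone_pos (ht : 0 < t) (hc : 0 < c) (hx : 0 < x) : 0 < oneFone t c x := by
  unfold oneFone
  have := summable_w ht hc hx
  exact Summable.tsum_pos this (fun k => le_of_lt (w_pos ht hc hx k)) 0 (w_pos ht hc hx 0)

end Analytic

section Uside

variable {a b δ c x : ℝ}

/-- Cauchy coefficient identity : difference of coefficient sums equals `(x^n/n!) * UU`. -/
lemma coeff_diff_eq (ha : 0 < a) (hab : a < b) (hδ : 0 < δ) (hc : 0 < c) (hx : 0 < x) (n : ℕ) :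
    ∑ k ∈ Finset.range (n+1),
        (poch (a+δ) k * x ^ k / (poch c k * k.factorial))
          * (poch b (n-k) * x ^ (n-k) / (poch c (n-k) * (n-k).factorial))
      - ∑ k ∈ Finset.range (n+1),
        (poch (b+δ) k * x ^ k / (poch c k * k.factorial))
          * (poch a (n-k) * x ^ (n-k) / (poch c (n-k) * (n-k).factorial))
      = (x ^ n / n.factorial) * UU a b δ c n 0 := by
  rw [← Finset.sum_sub_distrib]
  unfold UU
  rw [Icc_zero_eq_range, Nat.sub_zero, Finset.mul_sum]
  refine Finset.sum_congr rfl fun k hk => ?_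
  rw [Finset.mem_range] at hk
  have hkn : k ≤ n := by omega
  have hfact : (n.choose k : ℝ) * k.factorial * (n-k).factorial = n.factorial := by
    exact_mod_cast congrArg (Nat.cast : ℕ → ℝ) (Nat.choose_mul_factorial_mul_factorial hkn)
  have hxpow : x ^ k * x ^ (n-k) = x ^ n := by
    rw [← pow_add]; congr 1; omega
  have hck := poch_pos hc k
  have hcnk := poch_pos hc (n-k)
  have hkf : (0:ℝ) < k.factorial := by exact_mod_cast Nat.factorial_pos k
  have hnkf : (0:ℝ) < (n-k).factorial := by exact_mod_cast Nat.factorial_pos (n-k)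
  have hnf : (0:ℝ) < n.factorial := by exact_mod_cast Nat.factorial_pos n
  unfold pd
  field_simp
  rw [← hxpow, ← hfact]
  ring

lemma coeff_le (ha : 0 < a) (hab : a < b) (hδ : 0 < δ) (hc : 0 < c) (hx : 0 < x) (n : ℕ) :
    ∑ k ∈ Finset.range (n+1),
        (poch (b+δ) k * x ^ k / (poch c k * k.factorial))
          * (poch a (n-k) * x ^ (n-k) / (poch c (n-k) * (n-k).factorial))
      ≤ ∑ k ∈ Finset.range (n+1),
        (poch (a+δ) k * x ^ k / (poch c k * k.factorial))
          * (poch b (n-k) * x ^ (n-k) / (poch c (n-k) * (n-k).factorial)) := by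
  have h := coeff_diff_eq ha hab hδ hc hx n
  have hU := UU_nonneg ha hab hδ hc n
  have hxn : (0:ℝ) ≤ x ^ n / n.factorial := by
    have : (0:ℝ) < n.factorial := by exact_mod_cast Nat.factorial_pos n
    positivity
  nlinarith [mul_nonneg hxn hU]

lemma coeff_lt_two (ha : 0 < a) (hab : a < b) (hδ : 0 < δ) (hc : 0 < c) (hx : 0 < x) :
    ∑ k ∈ Finset.range (2+1),
        (poch (b+δ) k * x ^ k / (poch c k * k.factorial))
          * (poch a (2-k) * x ^ (2-k) / (poch c (2-k) * (2-k).factorial))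
      < ∑ k ∈ Finset.range (2+1),
        (poch (a+δ) k * x ^ k / (poch c k * k.factorial))
          * (poch b (2-k) * x ^ (2-k) / (poch c (2-k) * (2-k).factorial)) := by
  have h := coeff_diff_eq ha hab hδ hc hx 2
  have hU := UU_two_pos ha hab hδ hc
  have hxn : (0:ℝ) < x ^ 2 / (2:ℕ).factorial := by
    have : (0:ℝ) < (2:ℕ).factorial := by exact_mod_cast Nat.factorial_pos 2
    positivity
  nlinarith [mul_pos hxn hU]

/-- Upper bound : log-concavity of `oneFone` in the parameter. -/
lemma U_final (ha : 0 < a) (hab : a < b) (hδ : 0 < δ) (hc : 0 < c) (hx : 0 < x) :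
    oneFone (b+δ) c x * oneFone a c x < oneFone (a+δ) c x * oneFone b c x := by
  have hb : 0 < b := lt_trans ha hab
  have had : (0:ℝ) < a + δ := by linarith
  have hbd : (0:ℝ) < b + δ := by linarith
  unfold oneFone
  rw [tsum_mul_tsum_eq_tsum_sum_range_of_summable_norm
    (summable_w_norm hbd hc hx) (summable_w_norm ha hc hx)]
  rw [tsum_mul_tsum_eq_tsum_sum_range_of_summable_norm
    (summable_w_norm had hc hx) (summable_w_norm hb hc hx)]
  refine Summable.tsum_lt_tsum (i := 2) (fun n => coeff_le ha hab hδ hc hx n)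
    (coeff_lt_two ha hab hδ hc hx) ?_ ?_
  · exact (summable_norm_sum_mul_range_of_summable_norm
      (summable_w_norm hbd hc hx) (summable_w_norm ha hc hx)).of_norm
  · exact (summable_norm_sum_mul_range_of_summable_norm
      (summable_w_norm had hc hx) (summable_w_norm hb hc hx)).of_norm

end Uside
section GammaSide

open Real

lemma logGamma_two_point {x y x' y' : ℝ} (hx : 0 < x) (hxx' : x ≤ x') (hx'y' : x' ≤ y')
    (hy'y : y' ≤ y) (hsum : x + y = x' + y') :
    log (Gamma x') + log (Gamma y') ≤ log (Gamma x) + log (Gamma y) := by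
  rcases eq_or_lt_of_le hxx' with heq | hlt
  · have hy' : y' = y := by linarith
    rw [← heq, hy']
  · have hxy : x < y := by linarith
    set t := (y - x') / (y - x) with htdef
    have hyx : 0 < y - x := by linarith
    have ht0 : 0 ≤ t := div_nonneg (by linarith) (le_of_lt hyx)
    have ht1 : t ≤ 1 := by
      rw [div_le_one hyx]; linarith
    have ht1' : 0 ≤ 1 - t := by linarith
    have hsum1 : t + (1 - t) = 1 := by ring
    have hne : y - x ≠ 0 := ne_of_gt hyx
    have ex' : t * x + (1 - t) * y = x' := by
      rw [htdef]; field_simp; ring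
    have ey' : (1 - t) * x + t * y = y' := by
      have h : (t * x + (1 - t) * y) + ((1 - t) * x + t * y) = x + y := by ring
      linarith [ex']
    have hxm : x ∈ Set.Ioi (0:ℝ) := Set.mem_Ioi.mpr hx
    have hym : y ∈ Set.Ioi (0:ℝ) := Set.mem_Ioi.mpr (by linarith)
    have h1' := Real.convexOn_log_Gamma.2 hxm hym ht0 ht1' hsum1
    have h2' := Real.convexOn_log_Gamma.2 hxm hym ht1' ht0 (by ring)
    have h1 : log (Gamma (t * x + (1 - t) * y)) ≤ t * log (Gamma x) + (1 - t) * log (Gamma y) := by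
      simpa using h1'
    have h2 : log (Gamma ((1 - t) * x + t * y)) ≤ (1 - t) * log (Gamma x) + t * log (Gamma y) := by
      simpa using h2'
    rw [ex'] at h1
    rw [ey'] at h2
    linarith

lemma gamma_prod_le {x y x' y' : ℝ} (hx : 0 < x) (hxx' : x ≤ x') (hx'y' : x' ≤ y')
    (hy'y : y' ≤ y) (hsum : x + y = x' + y') :
    Gamma x' * Gamma y' ≤ Gamma x * Gamma y := by
  have hx' : 0 < x' := lt_of_lt_of_le hx hxx'
  have hy' : 0 < y' := lt_of_lt_of_le hx' hx'y'
  have hy : 0 < y := lt_of_lt_of_le hy' hy'y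
  have hl := logGamma_two_point hx hxx' hx'y' hy'y hsum
  have := Real.exp_le_exp.mpr hl
  rwa [Real.exp_add, Real.exp_add, Real.exp_log (Gamma_pos_of_pos hx),
    Real.exp_log (Gamma_pos_of_pos hy), Real.exp_log (Gamma_pos_of_pos hx'),
    Real.exp_log (Gamma_pos_of_pos hy')] at this

lemma gamma_prod_lt {x y x' y' : ℝ} (hx : 0 < x) (hxx' : x < x') (hx'y' : x' ≤ y')
    (hy'y : y' < y) (hsum : x + y = x' + y') :
    Gamma x' * Gamma y' < Gamma x * Gamma y := by
  have hx' : 0 < x' := lt_trans hx hxx'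
  have hy' : 0 < y' := lt_of_lt_of_le hx' hx'y'
  have hy : 0 < y := lt_trans hy' hy'y
  have hshift := gamma_prod_le (x := x+1) (y := y+1) (x' := x'+1) (y' := y'+1)
    (by linarith) (by linarith) (by linarith) (by linarith) (by linarith)
  rw [Real.Gamma_add_one (ne_of_gt hx), Real.Gamma_add_one (ne_of_gt hy),
    Real.Gamma_add_one (ne_of_gt hx'), Real.Gamma_add_one (ne_of_gt hy')] at hshift
  have hP : x * y < x' * y' := by nlinarith
  have hG := Real.Gamma_pos_of_pos hx
  have hG' := Real.Gamma_pos_of_pos hy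
  have hGx' := Real.Gamma_pos_of_pos hx'
  have hGy' := Real.Gamma_pos_of_pos hy'
  have hsh2 : (x'*y') * (Gamma x' * Gamma y') ≤ (x*y) * (Gamma x * Gamma y) := by
    nlinarith [hshift]
  by_contra hcon
  push_neg at hcon
  have c1 : (x*y) * (Gamma x * Gamma y) < (x'*y') * (Gamma x * Gamma y) :=
    mul_lt_mul_of_pos_right hP (mul_pos hG hG')
  have c2 : (x'*y') * (Gamma x * Gamma y) ≤ (x'*y') * (Gamma x' * Gamma y') :=
    mul_le_mul_of_nonneg_left hcon (by positivity)
  linarith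

/-- two-point majorization inequality for `N(w) = Γ(w)Γ(S-w)`. -/
lemma N_pair_le {S x y x'' y'' : ℝ} (hx : 0 < x) (hxx : x ≤ x'') (hxy : x'' ≤ y'')
    (hyy : y'' ≤ y) (hyS : y < S) (hsum : x + y = x'' + y'') :
    Gamma x'' * Gamma (S - x'') + Gamma y'' * Gamma (S - y'')
      ≤ Gamma x * Gamma (S - x) + Gamma y * Gamma (S - y) := by
  have hy : 0 < y := lt_of_lt_of_le (lt_of_lt_of_le hx (le_trans hxx hxy)) hyy
  have hx'' : 0 < x'' := lt_of_lt_of_le hx hxx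
  have hy'' : 0 < y'' := lt_of_lt_of_le hx'' hxy
  have hSx : 0 < S - x := by linarith
  have hSy : 0 < S - y := by linarith
  have hSx'' : 0 < S - x'' := by linarith
  have hSy'' : 0 < S - y'' := by linarith
  rcases eq_or_lt_of_le hxx with heq | hlt
  · have : y'' = y := by linarith
    rw [← heq, this]
  · have hxy' : x < y := by linarith
    set t := (y - x'') / (y - x) with htdef
    have hyx : 0 < y - x := by linarith
    have ht0 : 0 ≤ t := div_nonneg (by linarith) (le_of_lt hyx)
    have ht1 : t ≤ 1 := by rw [div_le_one hyx]; linarith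
    have ht1' : 0 ≤ 1 - t := by linarith
    have hne : y - x ≠ 0 := ne_of_gt hyx
    have ex : t * x + (1 - t) * y = x'' := by rw [htdef]; field_simp; ring
    have ey : (1 - t) * x + t * y = y'' := by
      have h : (t * x + (1 - t) * y) + ((1 - t) * x + t * y) = x + y := by ring
      linarith [ex]
    -- convexity of L w = log Γ w + log Γ (S - w)
    have hL : ∀ u v s₁ s₂ : ℝ, 0 < u → 0 < v → u < S → v < S → 0 ≤ s₁ → 0 ≤ s₂ → s₁ + s₂ = 1 →
        log (Gamma (s₁ * u + s₂ * v)) + log (Gamma (S - (s₁ * u + s₂ * v)))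
          ≤ s₁ * (log (Gamma u) + log (Gamma (S - u)))
            + s₂ * (log (Gamma v) + log (Gamma (S - v))) := by
      intro u v s₁ s₂ hu hv huS hvS hs₁ hs₂ hs
      have m1 : u ∈ Set.Ioi (0:ℝ) := Set.mem_Ioi.mpr hu
      have m2 : v ∈ Set.Ioi (0:ℝ) := Set.mem_Ioi.mpr hv
      have m3 : S - u ∈ Set.Ioi (0:ℝ) := Set.mem_Ioi.mpr (by linarith)
      have m4 : S - v ∈ Set.Ioi (0:ℝ) := Set.mem_Ioi.mpr (by linarith)
      have h1' := Real.convexOn_log_Gamma.2 m1 m2 hs₁ hs₂ hs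
      have h2' := Real.convexOn_log_Gamma.2 m3 m4 hs₁ hs₂ hs
      have h1 : log (Gamma (s₁ * u + s₂ * v)) ≤ s₁ * log (Gamma u) + s₂ * log (Gamma v) := by
        simpa using h1'
      have h2 : log (Gamma (s₁ * (S - u) + s₂ * (S - v)))
          ≤ s₁ * log (Gamma (S - u)) + s₂ * log (Gamma (S - v)) := by
        simpa using h2'
      have harg : s₁ * (S - u) + s₂ * (S - v) = S - (s₁ * u + s₂ * v) := by
        have : s₁ * S + s₂ * S = S := by rw [← add_mul, hs, one_mul]
        ring_nf
        ring_nf at this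
        linarith
      rw [harg] at h2
      linarith
    have key1 := hL x y t (1-t) hx hy (by linarith) hyS ht0 ht1' (by ring)
    have key2 := hL x y (1-t) t hx hy (by linarith) hyS ht1' ht0 (by ring)
    rw [ex] at key1
    rw [ey] at key2
    -- exponentiate: N x'' ≤ t * N x + (1-t) * N y
    have hNx : Real.exp (log (Gamma x) + log (Gamma (S - x))) = Gamma x * Gamma (S - x) := by
      rw [Real.exp_add, Real.exp_log (Gamma_pos_of_pos hx), Real.exp_log (Gamma_pos_of_pos hSx)]
    have hNy : Real.exp (log (Gamma y) + log (Gamma (S - y))) = Gamma y * Gamma (S - y) := by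
      rw [Real.exp_add, Real.exp_log (Gamma_pos_of_pos hy), Real.exp_log (Gamma_pos_of_pos hSy)]
    have expand : ∀ s₁ s₂ : ℝ, 0 ≤ s₁ → 0 ≤ s₂ → s₁ + s₂ = 1 →
        Real.exp (s₁ * (log (Gamma x) + log (Gamma (S - x)))
          + s₂ * (log (Gamma y) + log (Gamma (S - y))))
        ≤ s₁ * (Gamma x * Gamma (S - x)) + s₂ * (Gamma y * Gamma (S - y)) := by
      intro s₁ s₂ hs₁ hs₂ hs
      rw [Real.exp_add, mul_comm s₁ _, mul_comm s₂ _, Real.exp_mul, Real.exp_mul, hNx, hNy]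
      exact Real.geom_mean_le_arith_mean2_weighted hs₁ hs₂
        (le_of_lt (mul_pos (Gamma_pos_of_pos hx) (Gamma_pos_of_pos hSx)))
        (le_of_lt (mul_pos (Gamma_pos_of_pos hy) (Gamma_pos_of_pos hSy))) hs
    have e1 : Gamma x'' * Gamma (S - x'') ≤
        t * (Gamma x * Gamma (S - x)) + (1-t) * (Gamma y * Gamma (S - y)) := by
      have := le_trans (Real.exp_le_exp.mpr key1) (expand t (1-t) ht0 ht1' (by ring))
      rwa [Real.exp_add, Real.exp_log (Gamma_pos_of_pos hx''),
        Real.exp_log (Gamma_pos_of_pos hSx'')] at this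
    have e2 : Gamma y'' * Gamma (S - y'') ≤
        (1-t) * (Gamma x * Gamma (S - x)) + t * (Gamma y * Gamma (S - y)) := by
      have := le_trans (Real.exp_le_exp.mpr key2) (expand (1-t) t ht1' ht0 (by ring))
      rwa [Real.exp_add, Real.exp_log (Gamma_pos_of_pos hy''),
        Real.exp_log (Gamma_pos_of_pos hSy'')] at this
    linarith

lemma N_single_le {S w w'' : ℝ} (hw : 0 < w) (h1 : w ≤ w'') (h2 : w'' ≤ S - w) :
    Gamma w'' * Gamma (S - w'') ≤ Gamma w * Gamma (S - w) := by
  rcases le_total w'' (S - w'') with h | h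
  · have key := N_pair_le (S := S) (x := w) (x'' := w'') (y'' := S - w'') (y := S - w)
      hw h1 h (by linarith) (by linarith) (by ring)
    rw [show S - (S - w'') = w'' from by ring, show S - (S - w) = w from by ring] at key
    nlinarith [key]
  · have key := N_pair_le (S := S) (x := w) (x'' := S - w'') (y'' := w'') (y := S - w)
      hw (by linarith) h (by linarith) (by linarith) (by ring)
    rw [show S - (S - w'') = w'' from by ring, show S - (S - w) = w from by ring] at key
    nlinarith [key]

/-- the key pair inequality for the lower bound. -/
lemma Npair {S w₁ w₂ d : ℝ} (h1 : 0 < w₁) (h12 : w₁ ≤ w₂) (hd : 0 ≤ d)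
    (hS : w₁ + w₂ + d ≤ S) :
    Gamma (w₁ + d) * Gamma (S - (w₁ + d)) + Gamma (w₂ + d) * Gamma (S - (w₂ + d))
      ≤ Gamma w₁ * Gamma (S - w₁) + Gamma w₂ * Gamma (S - w₂) := by
  rcases le_total w₂ (w₁ + d) with hcase | hcase
  · -- case I : two single comparisons
    have hA : Gamma (w₂ + d) * Gamma (S - (w₂ + d)) ≤ Gamma w₁ * Gamma (S - w₁) :=
      N_single_le h1 (by linarith) (by linarith)
    have hB : Gamma (w₁ + d) * Gamma (S - (w₁ + d)) ≤ Gamma w₂ * Gamma (S - w₂) :=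
      N_single_le (by linarith) (by linarith) (by linarith)
    linarith
  · -- case II : reflection + pair inequality
    set V := S - w₂ - d with hV
    have hVw : w₁ ≤ V := by linarith
    have goal2 : Gamma (w₁ + d) * Gamma (S - (w₁ + d)) + Gamma V * Gamma (S - V)
        ≤ Gamma w₁ * Gamma (S - w₁) + Gamma (V + d) * Gamma (S - (V + d)) := by
      rcases le_total (w₁ + d) V with ho | ho
      · exact N_pair_le h1 (by linarith) ho (by linarith) (by linarith) (by ring)
      · have key := N_pair_le (S := S) (x := w₁) (x'' := V) (y'' := w₁ + d) (y := V + d)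
          h1 hVw ho (by linarith) (by linarith) (by ring)
        linarith
    have eV1 : Gamma V * Gamma (S - V) = Gamma (w₂ + d) * Gamma (S - (w₂ + d)) := by
      rw [show S - V = w₂ + d from by rw [hV]; ring, show (V : ℝ) = S - (w₂ + d) from by rw [hV]; ring]
      ring
    have eV2 : Gamma (V + d) * Gamma (S - (V + d)) = Gamma w₂ * Gamma (S - w₂) := by
      have h1' : V + d = S - w₂ := by rw [hV]; ring
      rw [h1', show S - (S - w₂) = w₂ from by ring]
      ring
    rw [eV1, eV2] at goal2
    linarith

end GammaSide
section Lside

open Real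

variable {a b δ c x t : ℝ}

lemma Gamma_poch (ht : 0 < t) (k : ℕ) : Gamma (t + k) = Gamma t * poch t k := by
  induction k with
  | zero => simp [poch_zero]
  | succ k ih =>
    have h : t + ((k+1 : ℕ) : ℝ) = (t + k) + 1 := by push_cast; ring
    have hpos : t + (k:ℝ) ≠ 0 := by positivity
    rw [h, Real.Gamma_add_one hpos, ih, poch_succ]
    ring

noncomputable def AA (t c x : ℝ) (k : ℕ) : ℝ :=
  Gamma (t + k) * x ^ k / (poch c k * k.factorial)

lemma AA_eq (ht : 0 < t) (c x : ℝ) (k : ℕ) :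
    AA t c x k = Gamma t * (poch t k * x ^ k / (poch c k * k.factorial)) := by
  unfold AA
  rw [Gamma_poch ht]
  ring

lemma summable_AA (ht : 0 < t) (hc : 0 < c) (hx : 0 < x) : Summable (AA t c x) := by
  refine ((summable_w ht hc hx).mul_left (Gamma t)).congr fun k => (AA_eq ht c x k).symm

lemma summable_AA_norm (ht : 0 < t) (hc : 0 < c) (hx : 0 < x) :
    Summable (fun k => ‖AA t c x k‖) := by
  refine (summable_AA ht hc hx).congr fun k => ?_
  have h1 : 0 < AA t c x k := by
    rw [AA_eq ht]
    exact mul_pos (Gamma_pos_of_pos ht) (w_pos ht hc hx k)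
  rw [Real.norm_eq_abs, abs_of_pos h1]

lemma tsum_AA (ht : 0 < t) (hc : 0 < c) (hx : 0 < x) :
    ∑' k, AA t c x k = Gamma t * oneFone t c x := by
  unfold oneFone
  rw [← tsum_mul_left]
  exact tsum_congr fun k => AA_eq ht c x k

lemma Lcoeff_le (ha : 0 < a) (hab : a < b) (hδ : 0 < δ) (hc : 0 < c) (hx : 0 < x) (n : ℕ) :
    ∑ k ∈ Finset.range (n+1), AA (a+δ) c x k * AA b c x (n-k)
      ≤ ∑ k ∈ Finset.range (n+1), AA a c x k * AA (b+δ) c x (n-k) := by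
  have hb : 0 < b := lt_trans ha hab
  set D : ℕ → ℝ := fun k => AA a c x k * AA (b+δ) c x (n-k) - AA (a+δ) c x k * AA b c x (n-k)
    with hD
  have key : ∀ k ∈ Finset.range (n+1), 0 ≤ D k + D (n-k) := by
    intro k hk
    rw [Finset.mem_range] at hk
    have hkn : k ≤ n := by omega
    have hnn : n - (n-k) = k := by omega
    have hcast : ((n-k : ℕ) : ℝ) = (n : ℝ) - (k:ℝ) := by
      rw [Nat.cast_sub hkn]
    have hkr : (0:ℝ) ≤ (k:ℝ) := Nat.cast_nonneg k
    have hmr : (0:ℝ) ≤ ((n-k : ℕ):ℝ) := Nat.cast_nonneg _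
    have hpk := poch_pos hc k
    have hpm := poch_pos hc (n-k)
    have hfk : (0:ℝ) < k.factorial := by exact_mod_cast Nat.factorial_pos k
    have hfm : (0:ℝ) < (n-k).factorial := by exact_mod_cast Nat.factorial_pos (n-k)
    have hW : (0:ℝ) ≤ (x ^ k / (poch c k * k.factorial))
        * (x ^ (n-k) / (poch c (n-k) * (n-k).factorial)) := by positivity
    have factor : D k + D (n-k) =
        ((Gamma (a + k) * Gamma (b + δ + (n-k:ℕ)) + Gamma (a + (n-k:ℕ)) * Gamma (b + δ + k))
          - (Gamma (a + δ + k) * Gamma (b + (n-k:ℕ)) + Gamma (a + δ + (n-k:ℕ)) * Gamma (b + k)))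
        * ((x ^ k / (poch c k * k.factorial))
            * (x ^ (n-k) / (poch c (n-k) * (n-k).factorial))) := by
      simp only [hD, AA, hnn]
      ring
    rw [factor]
    refine mul_nonneg ?_ hW
    set S : ℝ := a + b + δ + n with hS
    rcases le_total k (n-k) with hcc | hcc
    · have hle : a + (k:ℝ) ≤ a + ((n-k:ℕ):ℝ) := by
        have : (k:ℝ) ≤ ((n-k:ℕ):ℝ) := by exact_mod_cast hcc
        linarith
      have hNp := Npair (S := S) (w₁ := a + (k:ℝ)) (w₂ := a + ((n-k:ℕ):ℝ)) (d := δ)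
        (by positivity) hle (le_of_lt hδ) (by rw [hcast, hS]; linarith)
      rw [show S - (a + (k:ℝ) + δ) = b + ((n-k:ℕ):ℝ) from by rw [hcast, hS]; ring,
        show S - (a + ((n-k:ℕ):ℝ) + δ) = b + (k:ℝ) from by rw [hcast, hS]; ring,
        show S - (a + (k:ℝ)) = b + δ + ((n-k:ℕ):ℝ) from by rw [hcast, hS]; ring,
        show S - (a + ((n-k:ℕ):ℝ)) = b + δ + (k:ℝ) from by rw [hcast, hS]; ring,
        show a + (k:ℝ) + δ = a + δ + (k:ℝ) from by ring,
        show a + ((n-k:ℕ):ℝ) + δ = a + δ + ((n-k:ℕ):ℝ) from by ring] at hNp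
      linarith
    · have hle : a + ((n-k:ℕ):ℝ) ≤ a + (k:ℝ) := by
        have : ((n-k:ℕ):ℝ) ≤ (k:ℝ) := by exact_mod_cast hcc
        linarith
      have hNp := Npair (S := S) (w₁ := a + ((n-k:ℕ):ℝ)) (w₂ := a + (k:ℝ)) (d := δ)
        (by positivity) hle (le_of_lt hδ) (by rw [hcast, hS]; linarith)
      rw [show S - (a + (k:ℝ) + δ) = b + ((n-k:ℕ):ℝ) from by rw [hcast, hS]; ring,
        show S - (a + ((n-k:ℕ):ℝ) + δ) = b + (k:ℝ) from by rw [hcast, hS]; ring,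
        show S - (a + (k:ℝ)) = b + δ + ((n-k:ℕ):ℝ) from by rw [hcast, hS]; ring,
        show S - (a + ((n-k:ℕ):ℝ)) = b + δ + (k:ℝ) from by rw [hcast, hS]; ring,
        show a + (k:ℝ) + δ = a + δ + (k:ℝ) from by ring,
        show a + ((n-k:ℕ):ℝ) + δ = a + δ + ((n-k:ℕ):ℝ) from by ring] at hNp
      linarith
  have reflect : ∑ k ∈ Finset.range (n+1), D (n-k) = ∑ k ∈ Finset.range (n+1), D k := by
    have := Finset.sum_range_reflect D (n+1)
    simpa using this
  have h2 : 0 ≤ ∑ k ∈ Finset.range (n+1), (D k + D (n-k)) :=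
    Finset.sum_nonneg key
  rw [Finset.sum_add_distrib, reflect] at h2
  have h3 : 0 ≤ ∑ k ∈ Finset.range (n+1), D k := by linarith
  rw [hD] at h3
  rw [Finset.sum_sub_distrib] at h3
  linarith

lemma Lcoeff_lt_zero (ha : 0 < a) (hab : a < b) (hδ : 0 < δ) (hc : 0 < c) (hx : 0 < x) :
    ∑ k ∈ Finset.range (0+1), AA (a+δ) c x k * AA b c x (0-k)
      < ∑ k ∈ Finset.range (0+1), AA a c x k * AA (b+δ) c x (0-k) := by
  rw [show (0:ℕ)+1 = 1 from rfl]
  simp only [Finset.sum_range_one]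
  have hA0 : ∀ t : ℝ, AA t c x 0 = Gamma t := by
    intro t
    unfold AA
    simp [poch_zero]
  rw [hA0, hA0, hA0, hA0]
  rcases le_total (a+δ) b with h | h
  · exact gamma_prod_lt ha (by linarith) h (by linarith) (by ring)
  · have := gamma_prod_lt (x := a) (x' := b) (y' := a+δ) (y := b+δ)
      ha hab h (by linarith) (by ring)
    linarith [this]

lemma L_final (ha : 0 < a) (hab : a < b) (hδ : 0 < δ) (hc : 0 < c) (hx : 0 < x) :
    Gamma (a+δ) * oneFone (a+δ) c x * (Gamma b * oneFone b c x)
      < Gamma a * oneFone a c x * (Gamma (b+δ) * oneFone (b+δ) c x) := by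
  have hb : 0 < b := lt_trans ha hab
  have had : (0:ℝ) < a + δ := by linarith
  have hbd : (0:ℝ) < b + δ := by linarith
  rw [← tsum_AA had hc hx, ← tsum_AA hb hc hx, ← tsum_AA ha hc hx, ← tsum_AA hbd hc hx]
  rw [tsum_mul_tsum_eq_tsum_sum_range_of_summable_norm
    (summable_AA_norm had hc hx) (summable_AA_norm hb hc hx)]
  rw [tsum_mul_tsum_eq_tsum_sum_range_of_summable_norm
    (summable_AA_norm ha hc hx) (summable_AA_norm hbd hc hx)]
  refine Summable.tsum_lt_tsum (i := 0) (fun n => Lcoeff_le ha hab hδ hc hx n)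
    (Lcoeff_lt_zero ha hab hδ hc hx) ?_ ?_
  · exact (summable_norm_sum_mul_range_of_summable_norm
      (summable_AA_norm had hc hx) (summable_AA_norm hb hc hx)).of_norm
  · exact (summable_norm_sum_mul_range_of_summable_norm
      (summable_AA_norm ha hc hx) (summable_AA_norm hbd hc hx)).of_norm

end Lside

theorem stmt_19 (a b c δ x : ℝ) (ha : 0 < a) (hab : a < b) (hc : 0 < c)
    (hδ : 0 < δ) (hx : 0 < x) :
    Real.Gamma (a + δ) * Real.Gamma b / (Real.Gamma (b + δ) * Real.Gamma a) <
      oneFone (b + δ) c x * oneFone a c x / (oneFone (a + δ) c x * oneFone b c x) ∧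
    oneFone (b + δ) c x * oneFone a c x / (oneFone (a + δ) c x * oneFone b c x) < 1 := by
  have hb : 0 < b := lt_trans ha hab
  have had : (0:ℝ) < a + δ := by linarith
  have hbd : (0:ℝ) < b + δ := by linarith
  have hfa := oneFone_pos ha hc hx
  have hfb := oneFone_pos hb hc hx
  have hfad := oneFone_pos had hc hx
  have hfbd := oneFone_pos hbd hc hx
  have hGa := Real.Gamma_pos_of_pos ha
  have hGb := Real.Gamma_pos_of_pos hb
  have hGad := Real.Gamma_pos_of_pos had
  have hGbd := Real.Gamma_pos_of_pos hbd
  constructor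
  · rw [div_lt_div_iff₀ (by positivity) (by positivity)]
    have hL := L_final ha hab hδ hc hx
    nlinarith [hL]
  · rw [div_lt_one (by positivity)]
    exact U_final ha hab hδ hc hx
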